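/- (Ridge regression pointwise error bound.) Under the setting of the ridge regression bias identity, if additionally ‖η‖₂ ≤ √d, then for any ψ ∈ ℝᵈ, |⟨η̂ − η, ψ⟩| ≤ √(ξ d) · ‖ψ‖_{Λ⁻¹}. -/

import Mathlib

open Matrix

lemma aux_vecMulVec_mulVec {d : ℕ} (w v x : Fin d → ℝ) :
    Matrix.vecMulVec w v *ᵥ x = (v ⬝ᵥ x) • w := by
  ext i
  simp [Matrix.mulVec, Matrix.vecMulVec_apply, dotProduct, Finset.mul_sum, mul_comm,
    mul_left_comm]

lemma aux_sum_mulVec {d m : ℕ} (M : Fin m → Matrix (Fin d) (Fin d) ℝ) (x : Fin d → ℝ) :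
    (∑ τ, M τ) *ᵥ x = ∑ τ, M τ *ᵥ x := by
  ext i
  simp only [Matrix.mulVec, dotProduct, Finset.sum_apply, Finset.sum_mul,
    Matrix.sum_apply]
  rw [Finset.sum_comm]

lemma aux_dotProduct_sum {d m : ℕ} (x : Fin d → ℝ) (f : Fin m → Fin d → ℝ) :
    x ⬝ᵥ (∑ τ, f τ) = ∑ τ, x ⬝ᵥ f τ := by
  simp only [dotProduct, Finset.sum_apply, Finset.mul_sum]
  exact Finset.sum_comm

lemma aux_psd_sum {d m : ℕ} (ψ : Fin m → Fin d → ℝ) :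
    (∑ τ, Matrix.vecMulVec (ψ τ) (ψ τ)).PosSemidef := by
  refine Matrix.PosSemidef.of_dotProduct_mulVec_nonneg ?_ ?_
  · unfold Matrix.IsHermitian
    rw [conjTranspose_sum]
    refine Finset.sum_congr rfl fun τ _ => ?_
    ext i j
    simp [Matrix.vecMulVec_apply, mul_comm]
  · intro x
    rw [aux_sum_mulVec]
    simp only [star_trivial]
    rw [aux_dotProduct_sum]
    refine Finset.sum_nonneg fun τ _ => ?_
    rw [aux_vecMulVec_mulVec, dotProduct_smul]
    simp only [star_trivial, smul_eq_mul, dotProduct_comm (ψ τ) x]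
    exact mul_self_nonneg _

lemma aux_dp_self_nonneg {d : ℕ} (u : Fin d → ℝ) : 0 ≤ u ⬝ᵥ u :=
  Finset.sum_nonneg fun i _ => mul_self_nonneg _

lemma aux_cs {d : ℕ} (u w : Fin d → ℝ) :
    |u ⬝ᵥ w| ≤ Real.sqrt (u ⬝ᵥ u) * Real.sqrt (w ⬝ᵥ w) := by
  rw [← Real.sqrt_mul (aux_dp_self_nonneg u), ← Real.sqrt_sq_eq_abs]
  apply Real.sqrt_le_sqrt
  have := Finset.sum_mul_sq_le_sq_mul_sq Finset.univ u w
  simpa [dotProduct, sq] using this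

/-- Ridge regression pointwise error bound:
`|⟨η̂ − η, ψ⟩| ≤ √(ξ d) ‖ψ‖_{Λ⁻¹}`. -/
theorem ridge_pointwise_error {d m : ℕ} (ψ : Fin m → Fin d → ℝ) (η : Fin d → ℝ)
    (hη : Real.sqrt (η ⬝ᵥ η) ≤ Real.sqrt d)
    (ξ : ℝ) (hξ : 0 < ξ) (r : Fin m → ℝ) (hr : ∀ τ, r τ = ψ τ ⬝ᵥ η)
    (Λ : Matrix (Fin d) (Fin d) ℝ)
    (hΛ : Λ = ∑ τ, Matrix.vecMulVec (ψ τ) (ψ τ) + ξ • (1 : Matrix (Fin d) (Fin d) ℝ))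
    (ηhat : Fin d → ℝ) (hηhat : ηhat = Λ⁻¹ *ᵥ (∑ τ, r τ • ψ τ)) :
    ∀ ψ0 : Fin d → ℝ,
      |(ηhat - η) ⬝ᵥ ψ0| ≤ Real.sqrt (ξ * d) * Real.sqrt (ψ0 ⬝ᵥ (Λ⁻¹ *ᵥ ψ0)) := by
  intro ψ0
  set A : Matrix (Fin d) (Fin d) ℝ := ∑ τ, Matrix.vecMulVec (ψ τ) (ψ τ) with hAdef
  have hApsd : A.PosSemidef := aux_psd_sum ψ
  have hPDsm : (ξ • (1 : Matrix (Fin d) (Fin d) ℝ)).PosDef := by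
    rw [Matrix.smul_one_eq_diagonal]
    exact Matrix.PosDef.diagonal fun _ => hξ
  have hPD : Λ.PosDef := hΛ ▸ Matrix.PosDef.posSemidef_add hApsd hPDsm
  have hPDi : Λ⁻¹.PosDef := hPD.inv
  have hdet : IsUnit Λ.det := (Matrix.isUnit_iff_isUnit_det Λ).mp hPD.isUnit
  set y : Fin d → ℝ := Λ⁻¹ *ᵥ η with hydef
  -- step 1: the bias identity
  have hΛη : Λ *ᵥ η = (∑ τ, r τ • ψ τ) + ξ • η := by
    rw [hΛ, add_mulVec, aux_sum_mulVec, Matrix.smul_mulVec, one_mulVec]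
    congr 1
    exact Finset.sum_congr rfl fun τ _ => by rw [aux_vecMulVec_mulVec, hr τ]
  have hηhat2 : ηhat - η = -(ξ • y) := by
    have hsum : (∑ τ, r τ • ψ τ) = Λ *ᵥ η - ξ • η := by rw [hΛη]; abel
    rw [hηhat, hsum, mulVec_sub, Matrix.mulVec_mulVec, Matrix.nonsing_inv_mul Λ hdet,
      one_mulVec, Matrix.mulVec_smul, ← hydef]
    abel
  -- step 2: Cauchy-Schwarz wrt Λ⁻¹
  open scoped MatrixOrder in
  set S := CFC.sqrt Λ⁻¹ with hSdef
  open scoped MatrixOrder in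
  have hSmul : S * S = Λ⁻¹ := CFC.sqrt_mul_sqrt_self Λ⁻¹ hPDi.posSemidef.nonneg
  have hSt : Sᵀ = S := by
    open scoped MatrixOrder in
    have h := (Matrix.nonneg_iff_posSemidef.mp (CFC.sqrt_nonneg Λ⁻¹)).1.eq
    rwa [Matrix.conjTranspose_eq_transpose_of_trivial] at h
  have hΛt : Λ⁻¹ᵀ = Λ⁻¹ := by
    have h := hPDi.isHermitian.eq
    rwa [Matrix.conjTranspose_eq_transpose_of_trivial] at h
  have hsymm : ∀ a b : Fin d → ℝ, (Λ⁻¹ *ᵥ a) ⬝ᵥ b = a ⬝ᵥ (Λ⁻¹ *ᵥ b) := by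
    intro a b
    rw [dotProduct_mulVec a Λ⁻¹ b, ← Matrix.mulVec_transpose, hΛt]
  set u : Fin d → ℝ := S *ᵥ η with hudef
  set w : Fin d → ℝ := S *ᵥ ψ0 with hwdef
  have hsq : ∀ a b : Fin d → ℝ, (S *ᵥ a) ⬝ᵥ (S *ᵥ b) = a ⬝ᵥ (Λ⁻¹ *ᵥ b) := by
    intro a b
    rw [dotProduct_mulVec (S *ᵥ a) S b, ← Matrix.mulVec_transpose, hSt,
      Matrix.mulVec_mulVec, hSmul, hsymm]
  have h1 : y ⬝ᵥ ψ0 = u ⬝ᵥ w := by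
    rw [hudef, hwdef, hsq, hydef, hsymm]
  have h2 : u ⬝ᵥ u = η ⬝ᵥ y := hsq η η
  have h3 : w ⬝ᵥ w = ψ0 ⬝ᵥ (Λ⁻¹ *ᵥ ψ0) := hsq ψ0 ψ0
  -- step 3: ξ ⟨η, y⟩ ≤ ⟨η, η⟩
  have hΛy : Λ *ᵥ y = η := by
    rw [hydef, Matrix.mulVec_mulVec, Matrix.mul_nonsing_inv Λ hdet, one_mulVec]
  have hsplit : η = A *ᵥ y + ξ • y := by
    rw [← hΛy, hΛ, add_mulVec, Matrix.smul_mulVec, one_mulVec]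
  set z : Fin d → ℝ := A *ᵥ y with hzdef
  have hzz : 0 ≤ z ⬝ᵥ z := aux_dp_self_nonneg z
  have hyy : 0 ≤ y ⬝ᵥ y := aux_dp_self_nonneg y
  have hyz : 0 ≤ y ⬝ᵥ z := by simpa using hApsd.dotProduct_mulVec_nonneg y
  have e1 : η ⬝ᵥ η = z ⬝ᵥ z + ξ * (y ⬝ᵥ z) + ξ * (y ⬝ᵥ z) + ξ * ξ * (y ⬝ᵥ y) := by
    rw [hsplit]
    simp only [add_dotProduct, dotProduct_add, smul_dotProduct, dotProduct_smul, smul_eq_mul,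
      dotProduct_comm z y]
    ring
  have e2 : η ⬝ᵥ y = y ⬝ᵥ z + ξ * (y ⬝ᵥ y) := by
    rw [hsplit]
    simp only [add_dotProduct, smul_dotProduct, smul_eq_mul, dotProduct_comm z y]
  have key2 : ξ * (η ⬝ᵥ y) ≤ η ⬝ᵥ η := by
    rw [e1, e2]; nlinarith
  have hηy : 0 ≤ η ⬝ᵥ y := by rw [e2]; positivity
  -- step 4: ‖η‖² ≤ d
  have key3 : η ⬝ᵥ η ≤ (d : ℝ) := by
    have h0 := aux_dp_self_nonneg η
    nlinarith [Real.sq_sqrt h0, Real.sq_sqrt (Nat.cast_nonneg d : (0:ℝ) ≤ (d:ℝ)),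
      Real.sqrt_nonneg (η ⬝ᵥ η), Real.sqrt_nonneg (d : ℝ)]
  have hbound : ξ * Real.sqrt (η ⬝ᵥ y) ≤ Real.sqrt (ξ * d) := by
    rw [show ξ * Real.sqrt (η ⬝ᵥ y) = Real.sqrt (ξ ^ 2 * (η ⬝ᵥ y)) from by
      rw [Real.sqrt_mul (sq_nonneg ξ), Real.sqrt_sq hξ.le]]
    apply Real.sqrt_le_sqrt
    nlinarith
  -- combine
  calc |(ηhat - η) ⬝ᵥ ψ0| = ξ * |u ⬝ᵥ w| := by
        rw [hηhat2, neg_dotProduct, smul_dotProduct, abs_neg, smul_eq_mul, abs_mul,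
          abs_of_pos hξ, h1]
    _ ≤ ξ * (Real.sqrt (u ⬝ᵥ u) * Real.sqrt (w ⬝ᵥ w)) :=
        mul_le_mul_of_nonneg_left (aux_cs u w) hξ.le
    _ = (ξ * Real.sqrt (η ⬝ᵥ y)) * Real.sqrt (ψ0 ⬝ᵥ (Λ⁻¹ *ᵥ ψ0)) := by
        rw [h2, h3]; ring
    _ ≤ Real.sqrt (ξ * d) * Real.sqrt (ψ0 ⬝ᵥ (Λ⁻¹ *ᵥ ψ0)) :=
        mul_le_mul_of_nonneg_right hbound (Real.sqrt_nonneg _)
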